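/- Let X be a regular R₀-space. For each finite open cover 𝒰 of X let B_𝒰 = ⋃_{U∈𝒰} U × U. Then the family {B_𝒰 : 𝒰 a finite open cover of X} is a symmetric entourage base for X which is locally uniform: for every x ∈ X and neighborhood O of x there is a finite open cover 𝒰 with B_𝒰 B_𝒰⁻¹ B_𝒰[x] ⊆ O. -/

import Mathlib

/-- The entourages `B_𝒰 = ⋃_{U ∈ 𝒰} U × U` associated to finite open covers `𝒰` of `X`. -/
def coverEnt (X : Type*) [TopologicalSpace X] : Set (Set (X × X)) :=
  {B | ∃ 𝒰 : Set (Set X), 𝒰.Finite ∧ (∀ U ∈ 𝒰, IsOpen U) ∧ ⋃₀ 𝒰 = Set.univ ∧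
    B = ⋃ U ∈ 𝒰, U ×ˢ U}

lemma mem_coverB {X : Type*} {𝒰 : Set (Set X)} {a b : X} :
    (a, b) ∈ ⋃ U ∈ 𝒰, U ×ˢ U ↔ ∃ U ∈ 𝒰, a ∈ U ∧ b ∈ U := by
  simp [Set.mem_iUnion]
  tauto

lemma aux_reg {X : Type*} [TopologicalSpace X] [RegularSpace X] {x : X} {O : Set X}
    (hO : O ∈ nhds x) : ∃ A : Set X, IsOpen A ∧ x ∈ A ∧ closure A ⊆ O := by
  obtain ⟨t, ht, htc, hts⟩ := exists_mem_nhds_isClosed_subset hO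
  exact ⟨interior t, isOpen_interior, mem_interior_iff_mem_nhds.mpr ht,
    (closure_minimal interior_subset htc).trans hts⟩

open UniformSpace in
/-- For a regular `R₀`-space `X`, the family of entourages `B_𝒰` indexed by finite open
covers `𝒰` of `X` is a symmetric entourage base for `X` which is locally uniform. -/
theorem stmt_14 {X : Type*} [TopologicalSpace X] [RegularSpace X]
    (hR0 : ∀ x : X, ∀ O ∈ nhds x, closure {x} ⊆ O) :
    (∀ B ∈ coverEnt X, SetRel.id ⊆ B ∧ Prod.swap ⁻¹' B = B) ∧
    (∀ B₁ ∈ coverEnt X, ∀ B₂ ∈ coverEnt X, ∃ B₃ ∈ coverEnt X, B₃ ⊆ B₁ ∩ B₂) ∧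
    (∀ x : X, (∀ B ∈ coverEnt X, ball x B ∈ nhds x) ∧
      ∀ O ∈ nhds x, ∃ B ∈ coverEnt X, ball x B ⊆ O) ∧
    (∀ x : X, ∀ O ∈ nhds x, ∃ B ∈ coverEnt X,
      ball x (SetRel.comp B (SetRel.comp (Prod.swap ⁻¹' B) B)) ⊆ O) := by
  refine ⟨?_, ?_, ?_, ?_⟩
  · rintro B ⟨𝒰, hfin, hopen, hcov, rfl⟩
    constructor
    · rintro ⟨a, b⟩ hab
      rw [SetRel.mem_id] at hab
      subst hab
      have : a ∈ ⋃₀ 𝒰 := hcov ▸ Set.mem_univ a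
      obtain ⟨U, hU, haU⟩ := this
      exact mem_coverB.mpr ⟨U, hU, haU, haU⟩
    · ext ⟨a, b⟩
      simp only [Set.mem_preimage, Prod.swap_prod_mk, mem_coverB]
      exact ⟨fun ⟨U, hU, h1, h2⟩ => ⟨U, hU, h2, h1⟩, fun ⟨U, hU, h1, h2⟩ => ⟨U, hU, h2, h1⟩⟩
  · rintro B₁ ⟨𝒰₁, h1f, h1o, h1c, rfl⟩ B₂ ⟨𝒰₂, h2f, h2o, h2c, rfl⟩
    refine ⟨⋃ U ∈ Set.image2 (· ∩ ·) 𝒰₁ 𝒰₂, U ×ˢ U,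
      ⟨Set.image2 (· ∩ ·) 𝒰₁ 𝒰₂, h1f.image2 _ h2f, ?_, ?_, rfl⟩, ?_⟩
    · rintro W ⟨U, hU, V, hV, rfl⟩
      exact (h1o U hU).inter (h2o V hV)
    · apply Set.eq_univ_of_forall
      intro p
      obtain ⟨U, hU, hpU⟩ : p ∈ ⋃₀ 𝒰₁ := h1c ▸ Set.mem_univ p
      obtain ⟨V, hV, hpV⟩ : p ∈ ⋃₀ 𝒰₂ := h2c ▸ Set.mem_univ p
      exact ⟨U ∩ V, ⟨U, hU, V, hV, rfl⟩, hpU, hpV⟩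
    · rintro ⟨a, b⟩ hab
      obtain ⟨W, ⟨U, hU, V, hV, rfl⟩, ha, hb⟩ := mem_coverB.mp hab
      exact ⟨mem_coverB.mpr ⟨U, hU, ha.1, hb.1⟩, mem_coverB.mpr ⟨V, hV, ha.2, hb.2⟩⟩
  · intro x
    constructor
    · rintro B ⟨𝒰, hfin, hopen, hcov, rfl⟩
      obtain ⟨U, hU, hxU⟩ : x ∈ ⋃₀ 𝒰 := hcov ▸ Set.mem_univ x
      refine Filter.mem_of_superset ((hopen U hU).mem_nhds hxU) ?_
      intro y hy
      exact mem_coverB.mpr ⟨U, hU, hxU, hy⟩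
    · intro O hO
      obtain ⟨O', hO'O, hO'open, hxO'⟩ := mem_nhds_iff.mp hO
      set 𝒰 : Set (Set X) := {O', (closure {x})ᶜ} with h𝒰
      refine ⟨⋃ U ∈ 𝒰, U ×ˢ U, ⟨𝒰, (Set.finite_singleton _).insert _, ?_, ?_, rfl⟩, ?_⟩
      · rintro U hU
        rcases hU with rfl | rfl
        · exact hO'open
        · exact isClosed_closure.isOpen_compl
      · apply Set.eq_univ_of_forall
        intro p
        by_cases hp : p ∈ closure ({x} : Set X)
        · exact ⟨O', Or.inl rfl, hR0 x O' (hO'open.mem_nhds hxO') hp⟩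
        · exact ⟨(closure {x})ᶜ, Or.inr rfl, hp⟩
      · intro y hy
        obtain ⟨U, hU, hxU, hyU⟩ := mem_coverB.mp hy
        rcases hU with rfl | rfl
        · exact hO'O hyU
        · exact absurd (subset_closure (Set.mem_singleton x)) hxU
  · intro x O hO
    obtain ⟨O', hO'O, hO'open, hxO'⟩ := mem_nhds_iff.mp hO
    obtain ⟨A₃, hA₃o, hxA₃, hc3⟩ := aux_reg (hO'open.mem_nhds hxO')
    obtain ⟨A₂, hA₂o, hxA₂, hc2⟩ := aux_reg (hA₃o.mem_nhds hxA₃)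
    obtain ⟨A₁, hA₁o, hxA₁, hc1⟩ := aux_reg (hA₂o.mem_nhds hxA₂)
    have h23 : A₂ ⊆ A₃ := subset_closure.trans hc2
    have h3O : A₃ ⊆ O' := subset_closure.trans hc3
    set 𝒰 : Set (Set X) := {A₂, (closure A₁)ᶜ ∩ A₃, (closure A₂)ᶜ ∩ O', (closure A₃)ᶜ} with h𝒰
    refine ⟨⋃ U ∈ 𝒰, U ×ˢ U, ⟨𝒰,
      ((((Set.finite_singleton _).insert _).insert _).insert _), ?_, ?_, rfl⟩, ?_⟩
    · rintro U hU
      rcases hU with rfl | rfl | rfl | rfl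
      · exact hA₂o
      · exact isClosed_closure.isOpen_compl.inter hA₃o
      · exact isClosed_closure.isOpen_compl.inter hO'open
      · exact isClosed_closure.isOpen_compl
    · apply Set.eq_univ_of_forall
      intro p
      by_cases h3 : p ∈ closure A₃
      · by_cases h2 : p ∈ closure A₂
        · by_cases h1 : p ∈ closure A₁
          · exact ⟨A₂, Or.inl rfl, hc1 h1⟩
          · exact ⟨(closure A₁)ᶜ ∩ A₃, Or.inr (Or.inl rfl), h1, hc2 h2⟩
        · exact ⟨(closure A₂)ᶜ ∩ O', Or.inr (Or.inr (Or.inl rfl)), h2, hc3 h3⟩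
      · exact ⟨(closure A₃)ᶜ, Or.inr (Or.inr (Or.inr rfl)), h3⟩
    · intro w hw
      obtain ⟨y, hxy, z, hzy, hzw⟩ := hw
      rw [Set.mem_preimage] at hzy
      -- step 1 : y ∈ A₂
      obtain ⟨U, hU, hxU, hyU⟩ := mem_coverB.mp hxy
      have hy2 : y ∈ A₂ := by
        rcases hU with rfl | rfl | rfl | rfl
        · exact hyU
        · exact absurd (subset_closure hxA₁) hxU.1
        · exact absurd (subset_closure hxA₂) hxU.1
        · exact absurd (subset_closure hxA₃) hxU
      -- step 2 : z ∈ A₃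
      obtain ⟨V, hV, hzV, hyV⟩ := mem_coverB.mp hzy
      have hz3 : z ∈ A₃ := by
        rcases hV with rfl | rfl | rfl | rfl
        · exact h23 hzV
        · exact hzV.2
        · exact absurd (subset_closure hy2) hyV.1
        · exact absurd (subset_closure (h23 hy2)) hyV
      -- step 3 : w ∈ O'
      obtain ⟨W, hW, hzW, hwW⟩ := mem_coverB.mp hzw
      have hwO' : w ∈ O' := by
        rcases hW with rfl | rfl | rfl | rfl
        · exact h3O (h23 hwW)
        · exact h3O hwW.2
        · exact hwW.2
        · exact absurd (subset_closure hz3) hzW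
      exact hO'O hwO'
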